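/- For every q ∈ (0,1) and every s with 0 ≤ s ≤ 1 − q, the binary relative entropy satisfies D_B(q + s ‖ q) ≥ s² / ( 2·q·(1 − q) + 2·s/3 ). -/

import Mathlib

/-- Binary relative entropy `D_B(p‖q) = p·log(p/q) + (1−p)·log((1−p)/(1−q))`.
With Lean's convention `Real.log 0 = 0` this agrees with the continuous extension
at the endpoints. -/
noncomputable def binKL (p q : ℝ) : ℝ :=
  p * Real.log (p / q) + (1 - p) * Real.log ((1 - p) / (1 - q))

open Real Set

/-- Continuous version of `s ↦ binKL (q+s) q`. -/
noncomputable def phiAux (q s : ℝ) : ℝ :=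
  (q + s) * Real.log (q + s) - (q + s) * Real.log q
    + (1 - q - s) * Real.log (1 - q - s) - (1 - q - s) * Real.log (1 - q)

/-- The function whose nonnegativity we prove. -/
noncomputable def gAux (q s : ℝ) : ℝ :=
  phiAux q s - 3 * s ^ 2 / (6 * (q * (1 - q)) + 2 * s)

/-- Derivative of `gAux q`. -/
noncomputable def GAux (q s : ℝ) : ℝ :=
  Real.log (q + s) - Real.log q - Real.log (1 - q - s) + Real.log (1 - q)
    - (36 * (q * (1 - q)) * s + 6 * s ^ 2) / (6 * (q * (1 - q)) + 2 * s) ^ 2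

lemma hasDerivAt_gAux (q : ℝ) (hq0 : 0 < q) (hq1 : q < 1) (s : ℝ) (hsnn : 0 ≤ s)
    (hs1 : 0 < 1 - q - s) :
    HasDerivAt (gAux q) (GAux q s) s := by
  have hs0 : 0 < q + s := by linarith
  set a : ℝ := q * (1 - q) with ha
  have ha0 : 0 < a := by
    have h : 0 < 1 - q := by linarith
    positivity
  have hden : (0:ℝ) < 6 * a + 2 * s := by linarith
  have h1 : HasDerivAt (fun x : ℝ => q + x) 1 s := by
    simpa using (hasDerivAt_id s).const_add q
  have h2 : HasDerivAt (fun x : ℝ => 1 - q - x) (-1) s := by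
    simpa using ((hasDerivAt_id s).const_sub (1 - q))
  have hlog1 : HasDerivAt (fun x : ℝ => Real.log (q + x)) (1 / (q + s)) s := by
    simpa [Function.comp_def] using (Real.hasDerivAt_log hs0.ne').comp s h1
  have hlog2 : HasDerivAt (fun x : ℝ => Real.log (1 - q - x)) (-(1 / (1 - q - s))) s := by
    have := (Real.hasDerivAt_log hs1.ne').comp s h2
    simpa [Function.comp_def] using this
  have hA : HasDerivAt (fun x : ℝ => (q + x) * Real.log (q + x))
      (Real.log (q + s) + 1) s := by
    have := h1.mul hlog1
    refine this.congr_deriv ?_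
    field_simp
  have hB : HasDerivAt (fun x : ℝ => (q + x) * Real.log q) (Real.log q) s := by
    simpa using h1.mul_const (Real.log q)
  have hC : HasDerivAt (fun x : ℝ => (1 - q - x) * Real.log (1 - q - x))
      (-(Real.log (1 - q - s)) - 1) s := by
    have := h2.mul hlog2
    refine this.congr_deriv ?_
    field_simp
    ring
  have hD : HasDerivAt (fun x : ℝ => (1 - q - x) * Real.log (1 - q))
      (-(Real.log (1 - q))) s := by
    simpa using h2.mul_const (Real.log (1 - q))
  have hphi : HasDerivAt (phiAux q)
      (Real.log (q + s) - Real.log q - Real.log (1 - q - s) + Real.log (1 - q)) s := by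
    have := ((hA.sub hB).add hC).sub hD
    refine this.congr_deriv ?_
    ring
  have hnum : HasDerivAt (fun x : ℝ => 3 * x ^ 2) (6 * s) s := by
    have := (hasDerivAt_pow 2 s).const_mul (3:ℝ)
    refine this.congr_deriv ?_
    ring
  have hden' : HasDerivAt (fun x : ℝ => 6 * a + 2 * x) 2 s := by
    simpa using ((hasDerivAt_id s).const_mul (2:ℝ)).const_add (6 * a)
  have hr : HasDerivAt (fun x : ℝ => 3 * x ^ 2 / (6 * a + 2 * x))
      ((36 * a * s + 6 * s ^ 2) / (6 * a + 2 * s) ^ 2) s := by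
    have := hnum.div hden' hden.ne'
    refine this.congr_deriv ?_
    rw [div_eq_div_iff (by positivity) (by positivity)]
    ring
  have hfin := hphi.sub hr
  exact hfin.congr_deriv (by simp [GAux, ha])

lemma hasDerivAt_GAux (q : ℝ) (hq0 : 0 < q) (hq1 : q < 1) (s : ℝ) (hsnn : 0 ≤ s)
    (hs1 : 0 < 1 - q - s) :
    HasDerivAt (GAux q)
      (1 / (q + s) + 1 / (1 - q - s)
        - 216 * (q * (1 - q)) ^ 2 / (6 * (q * (1 - q)) + 2 * s) ^ 3) s := by
  have hs0 : 0 < q + s := by linarith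
  set a : ℝ := q * (1 - q) with ha
  have ha0 : 0 < a := by
    have h : 0 < 1 - q := by linarith
    positivity
  have hden : (0:ℝ) < 6 * a + 2 * s := by linarith
  have h1 : HasDerivAt (fun x : ℝ => q + x) 1 s := by
    simpa using (hasDerivAt_id s).const_add q
  have h2 : HasDerivAt (fun x : ℝ => 1 - q - x) (-1) s := by
    simpa using ((hasDerivAt_id s).const_sub (1 - q))
  have hlog1 : HasDerivAt (fun x : ℝ => Real.log (q + x)) (1 / (q + s)) s := by
    simpa [Function.comp_def] using (Real.hasDerivAt_log hs0.ne').comp s h1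
  have hlog2 : HasDerivAt (fun x : ℝ => Real.log (1 - q - x)) (-(1 / (1 - q - s))) s := by
    have := (Real.hasDerivAt_log hs1.ne').comp s h2
    simpa [Function.comp_def] using this
  have hnum : HasDerivAt (fun x : ℝ => 36 * a * x + 6 * x ^ 2) (36 * a + 12 * s) s := by
    have hn1 : HasDerivAt (fun x : ℝ => 36 * a * x) (36 * a) s := by
      simpa using (hasDerivAt_id s).const_mul (36 * a)
    have hn2 : HasDerivAt (fun x : ℝ => 6 * x ^ 2) (12 * s) s := by
      have := (hasDerivAt_pow 2 s).const_mul (6:ℝ)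
      refine this.congr_deriv ?_
      ring
    exact hn1.add hn2
  have hden2 : HasDerivAt (fun x : ℝ => (6 * a + 2 * x) ^ 2)
      (2 * (6 * a + 2 * s) * 2) s := by
    have hd1 : HasDerivAt (fun x : ℝ => 6 * a + 2 * x) 2 s := by
      simpa using ((hasDerivAt_id s).const_mul (2:ℝ)).const_add (6 * a)
    have := hd1.pow 2
    refine this.congr_deriv ?_
    ring
  have hr : HasDerivAt
      (fun x : ℝ => (36 * a * x + 6 * x ^ 2) / (6 * a + 2 * x) ^ 2)
      (216 * a ^ 2 / (6 * a + 2 * s) ^ 3) s := by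
    have hden2ne : ((6 * a + 2 * s) ^ 2 : ℝ) ≠ 0 := by positivity
    have := hnum.div hden2 hden2ne
    refine this.congr_deriv ?_
    rw [div_eq_div_iff (by positivity) (by positivity)]
    ring
  have hmain :=
    (((hlog1.sub_const (Real.log q)).sub hlog2).add_const (Real.log (1 - q))).sub hr
  have hfun : GAux q = fun x : ℝ =>
      (Real.log (q + x) - Real.log q - Real.log (1 - q - x) + Real.log (1 - q))
        - (36 * a * x + 6 * x ^ 2) / (6 * a + 2 * x) ^ 2 := by
    funext x
    simp only [GAux, ha]
  rw [hfun]
  refine hmain.congr_deriv ?_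
  ring

/-- Bennett-type lower bound for the binary relative entropy:
for `q ∈ (0,1)` and `0 ≤ s ≤ 1 − q`,
`D_B(q + s ‖ q) ≥ s² / ( 2·q·(1−q) + 2·s/3 )`. -/
theorem binKL_bennett_lower_bound
    (q : ℝ) (hq : q ∈ Set.Ioo (0:ℝ) 1)
    (s : ℝ) (hs0 : 0 ≤ s) (hs1 : s ≤ 1 - q) :
    s ^ 2 / (2 * q * (1 - q) + 2 * s / 3) ≤ binKL (q + s) q := by
  obtain ⟨hq0, hq1⟩ := hq
  set a : ℝ := q * (1 - q) with ha
  have hq1' : 0 < 1 - q := by linarith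
  have ha0 : 0 < a := by positivity
  -- Step 1: GAux q is nonneg on Ico 0 (1-q)
  have hGcont : ContinuousOn (GAux q) (Ico 0 (1 - q)) := by
    have l1 : ContinuousOn (fun x : ℝ => Real.log (q + x)) (Ico 0 (1 - q)) := by
      apply ContinuousOn.log (by fun_prop)
      intro x hx
      have h : (0:ℝ) < q + x := by linarith [hx.1]
      exact h.ne'
    have l2 : ContinuousOn (fun x : ℝ => Real.log (1 - q - x)) (Ico 0 (1 - q)) := by
      apply ContinuousOn.log (by fun_prop)
      intro x hx
      have h : (0:ℝ) < 1 - q - x := by linarith [hx.2]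
      exact h.ne'
    have l3 : ContinuousOn
        (fun x : ℝ => (36 * a * x + 6 * x ^ 2) / (6 * a + 2 * x) ^ 2)
        (Ico 0 (1 - q)) := by
      apply ContinuousOn.div (by fun_prop) (by fun_prop)
      intro x hx
      have h : (0:ℝ) < 6 * a + 2 * x := by linarith [hx.1]
      positivity
    exact (((l1.sub continuousOn_const).sub l2).add continuousOn_const).sub l3
  have hGmono : MonotoneOn (GAux q) (Ico 0 (1 - q)) := by
    apply monotoneOn_of_deriv_nonneg (convex_Ico 0 (1 - q)) hGcont
    · intro x hx
      rw [interior_Ico] at hx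
      exact (hasDerivAt_GAux q hq0 hq1 x hx.1.le
        (by linarith [hx.2])).differentiableAt.differentiableWithinAt
    · intro x hx
      rw [interior_Ico] at hx
      have hx0 : 0 < q + x := by linarith [hx.1]
      have hx1 : 0 < 1 - q - x := by linarith [hx.2]
      rw [(hasDerivAt_GAux q hq0 hq1 x hx.1.le hx1).deriv]
      have hsum : 1 / (q + x) + 1 / (1 - q - x) = 1 / ((q + x) * (1 - q - x)) := by
        field_simp
        ring
      have hden3 : (0:ℝ) < (6 * a + 2 * x) ^ 3 := by
        have h : (0:ℝ) < 6 * a + 2 * x := by linarith [hx.1]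
        positivity
      rw [hsum, sub_nonneg, div_le_div_iff₀ hden3 (mul_pos hx0 hx1), ← ha]
      -- key: 216 a^2 (q+x)(1-q-x) ≤ (6a+2x)^3
      have h1 : (q + x) * (1 - q - x) ≤ a + x := by
        rw [ha]
        nlinarith [mul_pos hq0 hx.1, sq_nonneg x]
      have h2 : 216 * a ^ 2 * ((q + x) * (1 - q - x)) ≤ 216 * a ^ 2 * (a + x) :=
        mul_le_mul_of_nonneg_left h1 (by positivity)
      nlinarith [h2, mul_nonneg ha0.le (sq_nonneg x), pow_nonneg hx.1.le 3]
  have hG0 : GAux q 0 = 0 := by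
    simp [GAux]
  have hGnonneg : ∀ x ∈ Ioo (0:ℝ) (1 - q), 0 ≤ GAux q x := by
    intro x hx
    have := hGmono (show (0:ℝ) ∈ Ico (0:ℝ) (1-q) from ⟨le_refl _, hq1'⟩)
      ⟨hx.1.le, hx.2⟩ hx.1.le
    rw [hG0] at this
    exact this
  -- Step 2: gAux q is nonneg on Icc 0 (1-q)
  have hgcont : ContinuousOn (gAux q) (Icc 0 (1 - q)) := by
    have hml : Continuous fun x : ℝ => x * Real.log x := Real.continuous_mul_log
    have c1 : Continuous fun x : ℝ => (q + x) * Real.log (q + x) :=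
      hml.comp (continuous_const.add continuous_id)
    have c2 : Continuous fun x : ℝ => (1 - q - x) * Real.log (1 - q - x) :=
      hml.comp (continuous_const.sub continuous_id)
    have hphi : Continuous (phiAux q) := by
      unfold phiAux
      exact ((c1.sub (by continuity)).add c2).sub (by continuity)
    apply hphi.continuousOn.sub
    apply ContinuousOn.div (by fun_prop) (by fun_prop)
    intro x hx
    have h : (0:ℝ) < 6 * a + 2 * x := by linarith [hx.1]
    exact h.ne'
  have hgmono : MonotoneOn (gAux q) (Icc 0 (1 - q)) := by
    apply monotoneOn_of_deriv_nonneg (convex_Icc 0 (1 - q)) hgcont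
    · intro x hx
      rw [interior_Icc] at hx
      exact (hasDerivAt_gAux q hq0 hq1 x hx.1.le
        (by linarith [hx.2])).differentiableAt.differentiableWithinAt
    · intro x hx
      rw [interior_Icc] at hx
      rw [(hasDerivAt_gAux q hq0 hq1 x hx.1.le (by linarith [hx.2])).deriv]
      exact hGnonneg x hx
  have hg0 : gAux q 0 = 0 := by
    simp [gAux, phiAux]
  have hgs : 0 ≤ gAux q s := by
    have := hgmono (show (0:ℝ) ∈ Icc 0 (1-q) from ⟨le_refl _, hq1'.le⟩) ⟨hs0, hs1⟩ hs0
    rw [hg0] at this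
    exact this
  -- Step 3: identify binKL with phiAux and the RHS with the rational function
  have hbin : binKL (q + s) q = phiAux q s := by
    unfold binKL phiAux
    have h1 : Real.log ((q + s) / q) = Real.log (q + s) - Real.log q :=
      Real.log_div (by positivity) hq0.ne'
    have h2 : (1 - (q + s)) * Real.log ((1 - (q + s)) / (1 - q))
        = (1 - q - s) * Real.log (1 - q - s) - (1 - q - s) * Real.log (1 - q) := by
      rcases eq_or_lt_of_le hs1 with h | h
      · have e1 : (1:ℝ) - (q + s) = 0 := by linarith
        have e2 : (1:ℝ) - q - s = 0 := by linarith
        rw [e1, e2]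
        simp
      · have hpos : 0 < 1 - q - s := by linarith
        have e3 : Real.log ((1 - (q + s)) / (1 - q))
            = Real.log (1 - q - s) - Real.log (1 - q) := by
          rw [show (1:ℝ) - (q + s) = 1 - q - s by ring]
          exact Real.log_div hpos.ne' hq1'.ne'
        rw [e3, show (1:ℝ) - (q + s) = 1 - q - s by ring]
        ring
    rw [h1, h2]
    ring
  have hrhs : s ^ 2 / (2 * q * (1 - q) + 2 * s / 3) = 3 * s ^ 2 / (6 * a + 2 * s) := by
    rw [ha]
    rw [div_eq_div_iff (by nlinarith) (by nlinarith)]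
    ring
  rw [hbin, hrhs]
  have hdef : gAux q s = phiAux q s - 3 * s ^ 2 / (6 * a + 2 * s) := rfl
  rw [hdef] at hgs
  linarith
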